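/- Let G be a finite group acting transitively on finite sets Ω₁ and Ω₂ of sizes m and n respectively. Fix α ∈ Ω₁, let G_α be the stabilizer of α, and let Δ₂ = ⋃_{i=1}^s δᵢG_α be a union of s distinct G_α-orbits on Ω₂ with representatives δ₁,…,δ_s. If Δ₂ ≠ Ω₂ and 𝓑 = {Δ₂g : g ∈ G}, then (Ω₂, 𝓑) is a 1-design with n points, block size |Δ₂|, and replication number (|G_α|/|G_{Δ₂}|)·Σ_{i=1}^s |αG_{δᵢ}|, i.e., every point of Ω₂ lies in exactly that many blocks. -/

import Mathlib

open Pointwise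

section Helpers

variable {G X : Type*} [Group G] [MulAction G X]

lemma aux_card_fiber (x y : X) (h : y ∈ MulAction.orbit G x) :
    Nat.card {g : G // g • x = y} = Nat.card (MulAction.stabilizer G x) := by
  obtain ⟨g₀, hg₀⟩ := h
  simp only at hg₀
  apply Nat.card_congr
  refine ⟨fun g => ⟨g₀⁻¹ * g.1, ?_⟩, fun h => ⟨g₀ * h.1, ?_⟩, ?_, ?_⟩
  · rw [MulAction.mem_stabilizer_iff, mul_smul, g.2, ← hg₀, inv_smul_smul]
  · have := h.2
    rw [MulAction.mem_stabilizer_iff] at this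
    rw [mul_smul, this, hg₀]
  · intro g; ext; simp
  · intro h; ext; simp

lemma aux_card_fiber' (x y : X) :
    Nat.card {g : G // g • x = y} = Nat.card {g : G // g • y = x} := by
  apply Nat.card_congr
  refine ⟨fun g => ⟨g.1⁻¹, ?_⟩, fun g => ⟨g.1⁻¹, ?_⟩, ?_, ?_⟩
  · rw [inv_smul_eq_iff]; exact g.2.symm
  · rw [inv_smul_eq_iff]; exact g.2.symm
  · intro g; ext; simp
  · intro g; ext; simp

lemma aux_card_sigma {ι : Type*} [Fintype ι] (f : ι → Type*) [∀ i, Finite (f i)] :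
    Nat.card (Σ i, f i) = ∑ i, Nat.card (f i) := by
  have : ∀ i, Fintype (f i) := fun i => Fintype.ofFinite _
  simp [Nat.card_eq_fintype_card]

lemma aux_os [Finite G] (b : X) :
    Nat.card (MulAction.orbit G b) * Nat.card (MulAction.stabilizer G b) = Nat.card G := by
  rw [← Nat.card_prod]
  exact Nat.card_congr (MulAction.orbitProdStabilizerEquivGroup G b)

lemma aux_card_stab_eq [Finite G] (x y : X) (h : y ∈ MulAction.orbit G x) :
    Nat.card (MulAction.stabilizer G x) = Nat.card (MulAction.stabilizer G y) := by
  have e1 := aux_os (G := G) x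
  have e2 := aux_os (G := G) y
  have hxy : MulAction.orbit G x = MulAction.orbit G y :=
    (MulAction.orbit.eq_or_disjoint x y).resolve_right (fun hd =>
      hd.ne_of_mem h (MulAction.mem_orbit_self y) rfl)
  rw [hxy] at e1
  have hfin : (MulAction.orbit G y).Finite := Set.finite_range _
  have hpos : 0 < Nat.card (MulAction.orbit G y) := by
    rw [Nat.card_pos_iff]
    exact ⟨⟨y, MulAction.mem_orbit_self y⟩, hfin.to_subtype⟩
  exact Nat.eq_of_mul_eq_mul_left hpos (e1.trans e2.symm)

/-- the two nested stabilizers are equivalent -/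
def aux_nested {Y : Type*} [MulAction G Y] (a : X) (b : Y) :
    MulAction.stabilizer (MulAction.stabilizer G a) b ≃
      MulAction.stabilizer (MulAction.stabilizer G b) a where
  toFun x := ⟨⟨(x.1 : G), x.2⟩, x.1.2⟩
  invFun x := ⟨⟨(x.1 : G), x.2⟩, x.1.2⟩
  left_inv x := rfl
  right_inv x := rfl

end Helpers

theorem stmt0 {G Ω₁ Ω₂ : Type*} [Group G] [Finite G] [Fintype Ω₁] [Fintype Ω₂]
    [MulAction G Ω₁] [MulAction G Ω₂]
    (h1 : MulAction.IsPretransitive G Ω₁) (h2 : MulAction.IsPretransitive G Ω₂)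
    (α : Ω₁) (s : ℕ) (δ : Fin s → Ω₂)
    (hdist : ∀ i j : Fin s, i ≠ j →
      MulAction.orbit (MulAction.stabilizer G α) (δ i) ≠
        MulAction.orbit (MulAction.stabilizer G α) (δ j))
    (Δ₂ : Set Ω₂)
    (hΔ : Δ₂ = ⋃ i : Fin s, MulAction.orbit (MulAction.stabilizer G α) (δ i))
    (hproper : Δ₂ ≠ Set.univ)
    (𝓑 : Set (Set Ω₂)) (h𝓑 : 𝓑 = {B | ∃ g : G, B = g • Δ₂}) :
    (∀ B ∈ 𝓑, Nat.card B = Nat.card Δ₂) ∧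
    ∀ p : Ω₂,
      Nat.card (MulAction.stabilizer G Δ₂) *
        Nat.card {B : Set Ω₂ // B ∈ 𝓑 ∧ p ∈ B} =
      Nat.card (MulAction.stabilizer G α) *
        ∑ i : Fin s, Nat.card (MulAction.orbit (MulAction.stabilizer G (δ i)) α) := by
  classical
  subst h𝓑
  constructor
  · intro B hB
    obtain ⟨g, rfl⟩ := hB
    rw [Nat.card_coe_set_eq, Nat.card_coe_set_eq, Set.ncard_smul_set]
  · intro p
    set 𝓑 : Set (Set Ω₂) := {B | ∃ g : G, B = g • Δ₂} with h𝓑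
    haveI : Fintype {B : Set Ω₂ // B ∈ 𝓑 ∧ p ∈ B} := Fintype.ofFinite _
    -- Claim A
    have claimA : Nat.card {g : G // p ∈ g • Δ₂}
        = Nat.card {B : Set Ω₂ // B ∈ 𝓑 ∧ p ∈ B} * Nat.card (MulAction.stabilizer G Δ₂) := by
      have e1 : {g : G // p ∈ g • Δ₂} ≃
          Σ B : {B : Set Ω₂ // B ∈ 𝓑 ∧ p ∈ B}, {g : G // g • Δ₂ = B.1} := by
        refine (Equiv.sigmaFiberEquiv (fun g : {g : G // p ∈ g • Δ₂} =>
          (⟨g.1 • Δ₂, ⟨⟨g.1, rfl⟩, g.2⟩⟩ :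
            {B : Set Ω₂ // B ∈ 𝓑 ∧ p ∈ B}))).symm.trans ?_
        refine Equiv.sigmaCongrRight fun B => ?_
        exact
          { toFun := fun t => ⟨t.1.1, congrArg Subtype.val t.2⟩
            invFun := fun g => ⟨⟨g.1, by rw [g.2]; exact B.2.2⟩, Subtype.ext g.2⟩
            left_inv := fun t => rfl
            right_inv := fun g => rfl }
      have hconst : ∀ B : {B : Set Ω₂ // B ∈ 𝓑 ∧ p ∈ B},
          Nat.card {g : G // g • Δ₂ = B.1} = Nat.card (MulAction.stabilizer G Δ₂) := by
        intro B
        apply aux_card_fiber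
        obtain ⟨g, hg⟩ := B.2.1
        exact ⟨g, hg.symm⟩
      rw [Nat.card_congr e1, aux_card_sigma,
        Finset.sum_congr rfl (fun B _ => hconst B), Finset.sum_const, smul_eq_mul]
      simp [Nat.card_eq_fintype_card]
    -- Claim B
    haveI : Fintype Δ₂ := Fintype.ofFinite _
    have claimB : Nat.card {g : G // p ∈ g • Δ₂}
        = Nat.card Δ₂ * Nat.card (MulAction.stabilizer G p) := by
      have e2 : {g : G // p ∈ g • Δ₂} ≃ Σ x : Δ₂, {g : G // g • (x : Ω₂) = p} := by
        refine (Equiv.sigmaFiberEquiv (fun g : {g : G // p ∈ g • Δ₂} =>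
          (⟨g.1⁻¹ • p, Set.mem_smul_set_iff_inv_smul_mem.mp g.2⟩ : Δ₂))).symm.trans ?_
        refine Equiv.sigmaCongrRight fun x => ?_
        exact
          { toFun := fun t => ⟨t.1.1, (inv_smul_eq_iff.mp (congrArg Subtype.val t.2)).symm⟩
            invFun := fun g => ⟨⟨g.1, by
                refine Set.mem_smul_set_iff_inv_smul_mem.mpr ?_
                have hx : g.1⁻¹ • p = ↑x := inv_smul_eq_iff.mpr g.2.symm
                rw [hx]; exact x.2⟩,
              Subtype.ext (inv_smul_eq_iff.mpr g.2.symm)⟩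
            left_inv := fun t => rfl
            right_inv := fun g => rfl }
      have hconst : ∀ x : Δ₂, Nat.card {g : G // g • (x : Ω₂) = p}
          = Nat.card (MulAction.stabilizer G p) := by
        intro x
        rw [aux_card_fiber' (x : Ω₂) p]
        apply aux_card_fiber
        obtain ⟨g, hg⟩ := h2.exists_smul_eq p (x : Ω₂)
        exact ⟨g, hg⟩
      rw [Nat.card_congr e2, aux_card_sigma,
        Finset.sum_congr rfl (fun x _ => hconst x), Finset.sum_const, smul_eq_mul]
      simp [Nat.card_eq_fintype_card]
    -- Claim C : card Δ₂ as a sum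
    have hdisj : Pairwise (Function.onFun Disjoint fun i : Fin s =>
        MulAction.orbit (MulAction.stabilizer G α) (δ i)) := fun i j hij =>
      (MulAction.orbit.eq_or_disjoint (δ i) (δ j)).resolve_left (hdist i j hij)
    have claimC : Nat.card Δ₂ = ∑ i : Fin s,
        Nat.card (MulAction.orbit (MulAction.stabilizer G α) (δ i)) := by
      rw [hΔ, Nat.card_congr (Set.unionEqSigmaOfDisjoint hdisj), aux_card_sigma]
    -- Claim D : per-index identity
    have claimD : ∀ i : Fin s,
        Nat.card (MulAction.stabilizer G p) *
          Nat.card (MulAction.orbit (MulAction.stabilizer G α) (δ i)) =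
        Nat.card (MulAction.stabilizer G α) *
          Nat.card (MulAction.orbit (MulAction.stabilizer G (δ i)) α) := by
      intro i
      have hstabp : Nat.card (MulAction.stabilizer G p)
          = Nat.card (MulAction.stabilizer G (δ i)) := by
        apply aux_card_stab_eq
        obtain ⟨g, hg⟩ := h2.exists_smul_eq p (δ i)
        exact ⟨g, hg⟩
      rw [hstabp]
      have os1 := aux_os (G := MulAction.stabilizer G α) (δ i)
      have os2 := aux_os (G := MulAction.stabilizer G (δ i)) α
      have hnest : Nat.card (MulAction.stabilizer (MulAction.stabilizer G α) (δ i))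
          = Nat.card (MulAction.stabilizer (MulAction.stabilizer G (δ i)) α) :=
        Nat.card_congr (aux_nested α (δ i))
      have hpos : 0 < Nat.card (MulAction.stabilizer (MulAction.stabilizer G α) (δ i)) :=
        Nat.card_pos
      apply Nat.eq_of_mul_eq_mul_right hpos
      calc Nat.card (MulAction.stabilizer G (δ i)) *
            Nat.card (MulAction.orbit (MulAction.stabilizer G α) (δ i)) *
            Nat.card (MulAction.stabilizer (MulAction.stabilizer G α) (δ i))
          = Nat.card (MulAction.stabilizer G (δ i)) * Nat.card (MulAction.stabilizer G α) := by
            rw [mul_assoc, os1]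
        _ = Nat.card (MulAction.stabilizer G α) *
            (Nat.card (MulAction.orbit (MulAction.stabilizer G (δ i)) α) *
              Nat.card (MulAction.stabilizer (MulAction.stabilizer G (δ i)) α)) := by
            rw [os2]; ring
        _ = _ := by rw [hnest]; ring
    -- put everything together
    rw [mul_comm, ← claimA, claimB, claimC, Finset.sum_mul, Finset.mul_sum]
    exact Finset.sum_congr rfl fun i _ => by
      rw [mul_comm _ (Nat.card (MulAction.stabilizer G p)), claimD i]
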